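/- arXiv:2406.16946 — 5 statements merged into one kernel-verified Lean document; each statement's English description precedes it below -/
import Mathlib

section
/- Let n be a positive integer, let h ∈ ℂⁿ, and let W be an n×n complex positive-semidefinite Hermitian matrix with hᴴ W h ≠ 0 (so that hᴴ W h is a strictly positive real number). Define w̄ := (hᴴ W h)^(−1/2) · (W h) and W̄ := w̄ w̄ᴴ. Then W̄ is positive semidefinite, has rank at most 1, and satisfies hᴴ W̄ h = hᴴ W h. -/
open Matrix
open scoped ComplexOrder

theorem stmt0 (n : ℕ) (hn : 0 < n) (h : Fin n → ℂ) (W : Matrix (Fin n) (Fin n) ℂ)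
    (hW : W.PosSemidef) (hne : star h ⬝ᵥ (W *ᵥ h) ≠ 0) :
    let wbar : Fin n → ℂ := ((star h ⬝ᵥ (W *ᵥ h)) ^ (-(1/2) : ℂ)) • (W *ᵥ h)
    let Wbar : Matrix (Fin n) (Fin n) ℂ := vecMulVec wbar (star wbar)
    Wbar.PosSemidef ∧ Wbar.rank ≤ 1 ∧ star h ⬝ᵥ (Wbar *ᵥ h) = star h ⬝ᵥ (W *ᵥ h) := by
  intro wbar Wbar
  set c : ℂ := star h ⬝ᵥ (W *ᵥ h) with hc
  have hc0 : 0 ≤ c := hW.dotProduct_mulVec_nonneg h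
  have hcsa : star c = c := (IsSelfAdjoint.of_nonneg hc0).star_eq
  set a : ℂ := c ^ (-(1/2) : ℂ) with ha
  have harg : c.arg ≠ Real.pi := by
    have him : c.im = 0 := by
      have := (Complex.le_def.mp hc0).2
      simpa using this.symm
    have hre : 0 ≤ c.re := by simpa using (Complex.le_def.mp hc0).1
    rw [Complex.arg_eq_zero_iff.mpr ⟨hre, him⟩]
    exact Real.pi_ne_zero.symm
  have hastar : star a = a := by
    have := Complex.conj_cpow c (-(1/2) : ℂ) harg
    rw [show (starRingEnd ℂ) c = c from hcsa] at this
    rw [show (starRingEnd ℂ) (-(1/2) : ℂ) = (-(1/2) : ℂ) by simp [map_ofNat]] at this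
    exact this.symm
  have hWbar_eq : Wbar = replicateCol (Fin 1) wbar * (replicateCol (Fin 1) wbar)ᴴ := by
    rw [conjTranspose_replicateCol]; exact vecMulVec_eq (Fin 1) wbar (star wbar)
  refine ⟨?_, ?_, ?_⟩
  · rw [hWbar_eq]; exact posSemidef_self_mul_conjTranspose _
  · rw [hWbar_eq]
    exact le_trans (rank_mul_le_left _ _) (by simpa using rank_le_card_width (replicateCol (Fin 1) wbar))
  · have hmv : Wbar *ᵥ h = (star wbar ⬝ᵥ h) • wbar := by
      ext i
      simp only [Wbar, mulVec, dotProduct, vecMulVec_apply, Pi.smul_apply, smul_eq_mul,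
        Finset.sum_mul, Finset.mul_sum]
      refine Finset.sum_congr rfl fun j _ => by ring
    rw [hmv, dotProduct_smul, smul_eq_mul]
    have h1 : star h ⬝ᵥ wbar = a * c := by
      rw [show wbar = a • (W *ᵥ h) from rfl, dotProduct_smul, smul_eq_mul, ← hc]
    have h2 : star wbar ⬝ᵥ h = a * c := by
      have : star wbar ⬝ᵥ h = star (star h ⬝ᵥ wbar) := by
        rw [← star_dotProduct_star, star_star, dotProduct_comm]
      rw [this, h1, star_mul', hastar, hcsa]
    rw [h1, h2]
    have haa : a * a = c⁻¹ := by
      rw [ha, ← Complex.cpow_add _ _ hne]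
      norm_num [Complex.cpow_neg_one]
    calc a * c * (a * c) = a * a * (c * c) := by ring
      _ = c⁻¹ * (c * c) := by rw [haa]
      _ = c := by field_simp
end

section
/- Let n, K be positive integers. For each i ∈ {1,…,K}, let Wᵢ be an n×n complex positive-semidefinite Hermitian matrix and hᵢ ∈ ℂⁿ a vector with hᵢᴴ Wᵢ hᵢ ≠ 0, and let R be an n×n positive-semidefinite Hermitian matrix. Define w̄ᵢ := (hᵢᴴ Wᵢ hᵢ)^(−1/2) · (Wᵢ hᵢ), W̄ᵢ := w̄ᵢ w̄ᵢᴴ, and R̄ := Σᵢ Wᵢ + R − Σᵢ W̄ᵢ. Then R̄ is positive semidefinite, and Σᵢ W̄ᵢ + R̄ = Σᵢ Wᵢ + R. -/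
open Matrix
open scoped ComplexOrder

open scoped InnerProductSpace in
lemma dot_cs {n : ℕ} (u v : Fin n → ℂ) :
    Complex.normSq (star u ⬝ᵥ v) ≤ (star u ⬝ᵥ u).re * (star v ⬝ᵥ v).re := by
  have hi : ∀ a b : Fin n → ℂ,
      (⟪((WithLp.equiv 2 (Fin n → ℂ)).symm a), ((WithLp.equiv 2 (Fin n → ℂ)).symm b)⟫_ℂ) = star a ⬝ᵥ b := by
    intro a b
    simp [PiLp.inner_apply, dotProduct, RCLike.inner_apply, mul_comm]
  have := inner_mul_inner_self_le (𝕜 := ℂ) ((WithLp.equiv 2 (Fin n → ℂ)).symm u) ((WithLp.equiv 2 (Fin n → ℂ)).symm v)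
  rw [hi, hi, hi] at this
  have hsymm : ‖star v ⬝ᵥ u‖ = ‖star u ⬝ᵥ v‖ := by
    have : star v ⬝ᵥ u = star (star u ⬝ᵥ v) := by
      rw [← star_dotProduct_star, star_star]
    rw [this, norm_star]
  rw [hsymm] at this
  calc Complex.normSq (star u ⬝ᵥ v) = ‖star u ⬝ᵥ v‖ * ‖star u ⬝ᵥ v‖ := by
        rw [Complex.normSq_eq_norm_sq]; norm_num [sq]
    _ ≤ _ := by rw [hi] at this; exact this

lemma key_psd {n : ℕ} {W : Matrix (Fin n) (Fin n) ℂ} (hW : W.PosSemidef) {h : Fin n → ℂ}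
    (hc : star h ⬝ᵥ (W *ᵥ h) ≠ 0) :
    (W - (star h ⬝ᵥ (W *ᵥ h))⁻¹ • vecMulVec (W *ᵥ h) (star (W *ᵥ h))).PosSemidef := by
  set c := star h ⬝ᵥ (W *ᵥ h) with hcdef
  have hc0 : 0 ≤ c := hW.dotProduct_mulVec_nonneg h
  rw [Complex.nonneg_iff] at hc0
  have hceq : c = (c.re : ℂ) := by
    rw [Complex.ext_iff]; simp [← hc0.2]
  have hcre : 0 < c.re := by
    rcases lt_or_eq_of_le hc0.1 with h' | h'
    · exact h'
    · exfalso; apply hc; rw [hceq, ← h']; simp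
  obtain ⟨B, hB⟩ : ∃ B : Matrix (Fin n) (Fin n) ℂ, W = Bᴴ * B := by
    open scoped MatrixOrder in
    obtain ⟨B, hB⟩ := CStarAlgebra.nonneg_iff_eq_star_mul_self.mp hW.nonneg
    exact ⟨B, hB⟩
  have hdot : ∀ a b : Fin n → ℂ, star a ⬝ᵥ (W *ᵥ b) = star (B *ᵥ a) ⬝ᵥ (B *ᵥ b) := by
    intro a b
    rw [hB, ← mulVec_mulVec, Matrix.dotProduct_mulVec, star_mulVec]
  refine PosSemidef.of_dotProduct_mulVec_nonneg ?_ ?_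
  · apply hW.1.sub
    show IsHermitian _
    unfold IsHermitian
    ext i j
    simp only [conjTranspose_apply, Matrix.smul_apply, vecMulVec_apply, Pi.star_apply, smul_eq_mul]
    have hsc : star (c⁻¹ : ℂ) = c⁻¹ := by rw [hceq]; simp
    simp only [StarMul.star_mul, star_star, hsc]
    ring
  · intro x
    set v := W *ᵥ h with hv
    have hm : (vecMulVec v (star v)) *ᵥ x = (star v ⬝ᵥ x) • v := by
      ext i
      simp only [mulVec, dotProduct, vecMulVec_apply, Pi.smul_apply, smul_eq_mul,
        Finset.sum_mul, Finset.mul_sum]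
      exact Finset.sum_congr rfl fun j _ => by ring
    have hconj : star v ⬝ᵥ x = star (star x ⬝ᵥ v) := by
      rw [← star_dotProduct_star, star_star]
    have hd0 : 0 ≤ star x ⬝ᵥ (W *ᵥ x) := hW.dotProduct_mulVec_nonneg x
    rw [Complex.nonneg_iff] at hd0
    rw [sub_mulVec, dotProduct_sub, smul_mulVec, hm, dotProduct_smul, dotProduct_smul,
      hconj, smul_eq_mul, smul_eq_mul,
      show star (star x ⬝ᵥ v) * (star x ⬝ᵥ v) = (Complex.normSq (star x ⬝ᵥ v) : ℂ) from by
        rw [Complex.star_def, ← Complex.normSq_eq_conj_mul_self]]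
    have hcs : Complex.normSq (star x ⬝ᵥ v) ≤ c.re * (star x ⬝ᵥ (W *ᵥ x)).re := by
      have h1 := dot_cs (B *ᵥ x) (B *ᵥ h)
      rw [← hdot, ← hdot, ← hdot] at h1
      calc Complex.normSq (star x ⬝ᵥ v) ≤ (star x ⬝ᵥ (W *ᵥ x)).re * c.re := h1
        _ = c.re * (star x ⬝ᵥ (W *ᵥ x)).re := mul_comm _ _
    set z := star x ⬝ᵥ v with hz
    set d := star x ⬝ᵥ (W *ᵥ x) with hd
    have hcinv : (c : ℂ)⁻¹ = ((c.re⁻¹ : ℝ) : ℂ) := by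
      rw [hceq]; push_cast; rfl
    rw [hcinv, Complex.nonneg_iff]
    constructor
    · simp only [Complex.sub_re, Complex.mul_re, Complex.ofReal_re, Complex.ofReal_im,
        Complex.normSq_ofReal, zero_mul, sub_zero, Complex.ofReal_natCast]
      have h2 : c.re⁻¹ * Complex.normSq z ≤ d.re := by
        rw [inv_mul_le_iff₀ hcre]
        exact hcs
      linarith
    · simp only [Complex.sub_im, Complex.mul_im, Complex.ofReal_re, Complex.ofReal_im,
        zero_mul, mul_zero, add_zero, zero_add, ← hd0.2]
      ring

lemma wbar_eq {n : ℕ} {W : Matrix (Fin n) (Fin n) ℂ} (hW : W.PosSemidef) {h : Fin n → ℂ}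
    (hc : star h ⬝ᵥ (W *ᵥ h) ≠ 0) :
    vecMulVec (((star h ⬝ᵥ (W *ᵥ h)) ^ (-(1/2) : ℂ)) • (W *ᵥ h))
        (star (((star h ⬝ᵥ (W *ᵥ h)) ^ (-(1/2) : ℂ)) • (W *ᵥ h)))
      = (star h ⬝ᵥ (W *ᵥ h))⁻¹ • vecMulVec (W *ᵥ h) (star (W *ᵥ h)) := by
  set c := star h ⬝ᵥ (W *ᵥ h) with hcdef
  have hc0 : 0 ≤ c := hW.dotProduct_mulVec_nonneg h
  rw [Complex.nonneg_iff] at hc0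
  have hceq : c = (c.re : ℂ) := by
    rw [Complex.ext_iff]; simp [← hc0.2]
  have hcre : 0 < c.re := by
    rcases lt_or_eq_of_le hc0.1 with h' | h'
    · exact h'
    · exfalso; apply hc; rw [hceq, ← h']; simp
  set a := c ^ (-(1/2) : ℂ) with hadef
  have ha : a = ((c.re ^ (-(1/2) : ℝ) : ℝ) : ℂ) := by
    rw [Complex.ofReal_cpow hc0.1, hadef]
    norm_num
    conv_lhs => rw [hceq]
  have hstar : star a = a := by rw [ha]; simp
  have hmul : a * a = c⁻¹ := by
    have he : (-(1/2) : ℝ) + (-(1/2)) = -1 := by norm_num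
    rw [ha, ← Complex.ofReal_mul, ← Real.rpow_add hcre, he, Real.rpow_neg_one,
      Complex.ofReal_inv, ← hceq]
  ext i j
  simp only [vecMulVec_apply, Pi.smul_apply, smul_eq_mul, Pi.star_apply, star_mul', hstar,
    Matrix.smul_apply]
  rw [← hmul]; ring

set_option maxHeartbeats 1000000 in
theorem stmt2 (n K : ℕ) (hn : 0 < n) (hK : 0 < K)
    (W : Fin K → Matrix (Fin n) (Fin n) ℂ) (h : Fin K → Fin n → ℂ)
    (R : Matrix (Fin n) (Fin n) ℂ)
    (hW : ∀ i, (W i).PosSemidef) (hR : R.PosSemidef)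
    (hne : ∀ i, star (h i) ⬝ᵥ (W i *ᵥ h i) ≠ 0) :
    let wbar : Fin K → Fin n → ℂ :=
      fun i => ((star (h i) ⬝ᵥ (W i *ᵥ h i)) ^ (-(1/2) : ℂ)) • (W i *ᵥ h i)
    let Wbar : Fin K → Matrix (Fin n) (Fin n) ℂ :=
      fun i => vecMulVec (wbar i) (star (wbar i))
    let Rbar : Matrix (Fin n) (Fin n) ℂ := (∑ i, W i) + R - ∑ i, Wbar i
    Rbar.PosSemidef ∧ (∑ i, Wbar i) + Rbar = (∑ i, W i) + R := by
  intro wbar Wbar Rbar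
  have hWbar : ∀ i, Wbar i
      = (star (h i) ⬝ᵥ (W i *ᵥ h i))⁻¹ • vecMulVec (W i *ᵥ h i) (star (W i *ᵥ h i)) :=
    fun i => wbar_eq (hW i) (hne i)
  have hsub : ∀ i, (W i - Wbar i).PosSemidef := by
    intro i
    rw [hWbar i]
    exact key_psd (hW i) (hne i)
  have hsum : (∑ i, (W i - Wbar i)).PosSemidef := by
    apply Finset.sum_induction _ _ (fun A B hA hB => hA.add hB) Matrix.PosSemidef.zero
    exact fun i _ => hsub i
  have hRbar : Rbar = (∑ i, (W i - Wbar i)) + R := by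
    show (∑ i, W i) + R - ∑ i, Wbar i = _
    rw [Finset.sum_sub_distrib]
    abel
  constructor
  · rw [hRbar]
    exact hsum.add hR
  · show (∑ i, Wbar i) + ((∑ i, W i) + R - ∑ i, Wbar i) = (∑ i, W i) + R
    abel
end

section
/- Let n be a positive integer, let M and K be nonempty finite index sets, and fix a pair (m₀,k₀) ∈ M × K. Let h ∈ ℂⁿ and set H := h hᴴ. For each (l,i) ∈ M × K, let W_{l,i} be an n×n complex positive-semidefinite Hermitian matrix and h_{l,i} ∈ ℂⁿ a vector with h_{l,i}ᴴ W_{l,i} h_{l,i} ≠ 0 and with h_{m₀,k₀} = h; for each l ∈ M let R_l be an n×n positive-semidefinite Hermitian matrix. Define w̄_{l,i} := (h_{l,i}ᴴ W_{l,i} h_{l,i})^(−1/2) · (W_{l,i} h_{l,i}), W̄_{l,i} := w̄_{l,i} w̄_{l,i}ᴴ, and R̄_l := Σ_{i∈K} W_{l,i} + R_l − Σ_{i∈K} W̄_{l,i}. Then for every σ² > 0, tr(H W̄_{m₀,k₀}) / ( Σ_{(l,i)≠(m₀,k₀)} tr(H W̄_{l,i}) + Σ_{l∈M} tr(H R̄_l)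 + σ² ) = tr(H W_{m₀,k₀}) / ( Σ_{(l,i)≠(m₀,k₀)} tr(H W_{l,i}) + Σ_{l∈M} tr(H R_l) + σ² ), where all traces are the (real) values of the corresponding quadratic forms. -/
open Matrix
open scoped ComplexOrder

lemma dot_vecMulVec_aux {n : ℕ} (u v x y : Fin n → ℂ) :
    y ⬝ᵥ (vecMulVec u v *ᵥ x) = (y ⬝ᵥ u) * (v ⬝ᵥ x) := by
  simp only [mulVec, dotProduct, vecMulVec_apply, Finset.sum_mul, Finset.mul_sum]
  rw [Finset.sum_comm]
  exact Finset.sum_congr rfl fun j _ => Finset.sum_congr rfl fun i _ => by ring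

lemma cpow_half_aux (a : ℂ) (ha : 0 ≤ a) (hne : a ≠ 0) :
    (a ^ (-(1/2) : ℂ)) * (starRingEnd ℂ (a ^ (-(1/2) : ℂ))) * a * (starRingEnd ℂ a) = a := by
  have him : a.im = 0 := ((Complex.nonneg_iff).1 ha).2.symm
  have hre : 0 ≤ a.re := ((Complex.nonneg_iff).1 ha).1
  have harg : a.arg ≠ Real.pi := fun hp => by
    have := (Complex.arg_eq_pi_iff.mp hp).1; linarith
  have hca : starRingEnd ℂ a = a := Complex.conj_eq_iff_im.mpr him
  have hconjhalf : starRingEnd ℂ (-(1/2) : ℂ) = (-(1/2) : ℂ) := by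
    simp [Complex.conj_ofNat]
  have hcc : starRingEnd ℂ (a ^ (-(1/2) : ℂ)) = a ^ (-(1/2) : ℂ) := by
    have := Complex.conj_cpow a (-(1/2) : ℂ) harg
    rw [hca, hconjhalf] at this
    exact this.symm
  rw [hcc, hca]
  have h2 : a ^ (-(1/2) : ℂ) * a ^ (-(1/2) : ℂ) = a ^ (-1 : ℂ) := by
    rw [← Complex.cpow_add _ _ hne]; norm_num
  calc a ^ (-(1/2) : ℂ) * a ^ (-(1/2) : ℂ) * a * a = a ^ (-1 : ℂ) * a * a := by rw [h2]
    _ = a := by rw [Complex.cpow_neg_one]; field_simp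

lemma sum_mulVec' {n : ℕ} {ι : Type*} (s : Finset ι) (A : ι → Matrix (Fin n) (Fin n) ℂ)
    (x y : Fin n → ℂ) : y ⬝ᵥ ((∑ i ∈ s, A i) *ᵥ x) = ∑ i ∈ s, y ⬝ᵥ (A i *ᵥ x) := by
  induction s using Finset.cons_induction with
  | empty => simp
  | cons a s ha ih => simp [Finset.sum_cons, Matrix.add_mulVec, dotProduct_add, ih]

lemma key_aux {n : ℕ} (h : Fin n → ℂ) (Wm : Matrix (Fin n) (Fin n) ℂ)
    (hWm : Wm.PosSemidef) (hane : star h ⬝ᵥ (Wm *ᵥ h) ≠ 0) :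
    (star h ⬝ᵥ (vecMulVec (((star h ⬝ᵥ (Wm *ᵥ h)) ^ (-(1/2) : ℂ)) • (Wm *ᵥ h))
        (star (((star h ⬝ᵥ (Wm *ᵥ h)) ^ (-(1/2) : ℂ)) • (Wm *ᵥ h))) *ᵥ h)).re
      = (star h ⬝ᵥ (Wm *ᵥ h)).re := by
  have ha : 0 ≤ star h ⬝ᵥ (Wm *ᵥ h) := hWm.dotProduct_mulVec_nonneg h
  set a := star h ⬝ᵥ (Wm *ᵥ h) with ha_def
  rw [dot_vecMulVec_aux, dotProduct_smul, star_smul, smul_dotProduct, star_dotProduct]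
  simp only [smul_eq_mul]
  have hsd : star (Wm *ᵥ h) ⬝ᵥ h = star a := star_dotProduct _ _
  rw [hsd, star_star]
  have e : a ^ (-(1/2):ℂ) * a * (star (a ^ (-(1/2):ℂ)) * star a) =
      a ^ (-(1/2):ℂ) * starRingEnd ℂ (a ^ (-(1/2):ℂ)) * a * starRingEnd ℂ a := by
    simp only [Complex.star_def]; ring
  rw [e, cpow_half_aux a ha hane]


theorem stmt4 (n : ℕ) (hn : 0 < n) (M K : Type*) [Fintype M] [Fintype K]
    [Nonempty M] [Nonempty K] [DecidableEq M] [DecidableEq K]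
    (m₀ : M) (k₀ : K) (h : Fin n → ℂ)
    (W : M × K → Matrix (Fin n) (Fin n) ℂ) (hch : M × K → Fin n → ℂ)
    (R : M → Matrix (Fin n) (Fin n) ℂ)
    (hW : ∀ p, (W p).PosSemidef) (hR : ∀ l, (R l).PosSemidef)
    (hne : ∀ p, star (hch p) ⬝ᵥ (W p *ᵥ hch p) ≠ 0)
    (hh : hch (m₀, k₀) = h) (σ2 : ℝ) (hσ : 0 < σ2) :
    let H : Matrix (Fin n) (Fin n) ℂ := vecMulVec h (star h)
    let trH : Matrix (Fin n) (Fin n) ℂ → ℝ := fun X => (star h ⬝ᵥ (X *ᵥ h)).re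
    let wbar : M × K → Fin n → ℂ :=
      fun p => ((star (hch p) ⬝ᵥ (W p *ᵥ hch p)) ^ (-(1/2) : ℂ)) • (W p *ᵥ hch p)
    let Wbar : M × K → Matrix (Fin n) (Fin n) ℂ :=
      fun p => vecMulVec (wbar p) (star (wbar p))
    let Rbar : M → Matrix (Fin n) (Fin n) ℂ :=
      fun l => (∑ i : K, W (l, i)) + R l - ∑ i : K, Wbar (l, i)
    trH (Wbar (m₀, k₀)) /
        ((∑ p ∈ Finset.univ.erase (m₀, k₀), trH (Wbar p)) + (∑ l, trH (Rbar l)) + σ2)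
      = trH (W (m₀, k₀)) /
        ((∑ p ∈ Finset.univ.erase (m₀, k₀), trH (W p)) + (∑ l, trH (R l)) + σ2) := by
  intro H trH wbar Wbar Rbar
  have key : trH (Wbar (m₀, k₀)) = trH (W (m₀, k₀)) := by
    have h1 := key_aux h (W (m₀, k₀)) (hW _) (by rw [← hh]; exact hne _)
    simpa only [trH, Wbar, wbar, hh] using h1
  have lin : ∀ l : M, trH (Rbar l) =
      ((∑ i : K, trH (W (l, i))) + trH (R l)) - ∑ i : K, trH (Wbar (l, i)) := by
    intro l
    simp only [trH, Rbar, Matrix.add_mulVec, Matrix.sub_mulVec, dotProduct_add, dotProduct_sub,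
      sum_mulVec', Complex.add_re, Complex.sub_re, Complex.re_sum]
  have hd : (∑ p ∈ Finset.univ.erase (m₀, k₀), trH (Wbar p)) + (∑ l, trH (Rbar l))
      = (∑ p ∈ Finset.univ.erase (m₀, k₀), trH (W p)) + (∑ l, trH (R l)) := by
    have e1 : ∀ (F : M × K → ℝ), ∑ p ∈ Finset.univ.erase (m₀, k₀), F p
        = (∑ p : M × K, F p) - F (m₀, k₀) :=
      fun F => Finset.sum_erase_eq_sub (Finset.mem_univ _)
    have e2 : ∀ (F : M × K → ℝ), ∑ l : M, ∑ i : K, F (l, i) = ∑ p : M × K, F p :=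
      fun F => (Fintype.sum_prod_type F).symm
    simp only [lin, Finset.sum_add_distrib, Finset.sum_sub_distrib,
      e1 (fun p => trH (Wbar p)), e1 (fun p => trH (W p)),
      e2 (fun p => trH (Wbar p)), e2 (fun p => trH (W p))]
    rw [key]; ring
  rw [key, hd]
end

section
/- Let n be a positive integer, let M and K be nonempty finite index sets, and fix (m₀,k₀) ∈ M × K. Let h ∈ ℂⁿ, H := h hᴴ, and let c ∈ ℝ, a ∈ ℝ be arbitrary constants. For each (l,i) ∈ M × K, let W_{l,i} and W⁰_{l,i} be n×n complex positive-semidefinite Hermitian matrices with h_{l,i}ᴴ W_{l,i} h_{l,i} ≠ 0 for given vectors h_{l,i} ∈ ℂⁿ satisfying h_{m₀,k₀} = h; for each l ∈ M let R_l and R⁰_l be positive-semidefinite Hermitian matrices. Define the reconstruction w̄_{l,i} := (h_{l,i}ᴴ W_{l,i} h_{l,i})^(−1/2) · (W_{l,i} h_{l,i}), W̄_{l,i} := w̄_{l,i} w̄_{l,i}ᴴ, R̄_l := Σ_{i} W_{l,i} + R_l − Σ_{i} W̄_{l,i}, and the surrogate objective F(V,S) := log₂( Σ_{(l,i)} tr(H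 V_{l,i}) + Σ_l tr(H S_l) + σ² ) − a − c·( Σ_{(l,i)≠(m₀,k₀)} tr(H (V_{l,i} − W⁰_{l,i})) + Σ_l tr(H (S_l − R⁰_l)) ) for σ² > 0. Then F(W̄, R̄) = F(W, R). -/
open Matrix
open scoped ComplexOrder

lemma dot_vecMulVec_mulVec {n : ℕ} (x v w y : Fin n → ℂ) :
    x ⬝ᵥ (vecMulVec v w *ᵥ y) = (x ⬝ᵥ v) * (w ⬝ᵥ y) := by
  simp only [dotProduct, mulVec, vecMulVec_apply, Finset.mul_sum, Finset.sum_mul]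
  rw [Finset.sum_comm]
  exact Finset.sum_congr rfl fun i _ => Finset.sum_congr rfl fun j _ => by ring

theorem stmt5 (n : ℕ) (hn : 0 < n) (M K : Type*) [Fintype M] [Fintype K]
    [Nonempty M] [Nonempty K] [DecidableEq M] [DecidableEq K]
    (m₀ : M) (k₀ : K) (h : Fin n → ℂ) (c a : ℝ)
    (W W0 : M × K → Matrix (Fin n) (Fin n) ℂ) (hch : M × K → Fin n → ℂ)
    (R R0 : M → Matrix (Fin n) (Fin n) ℂ)
    (hW : ∀ p, (W p).PosSemidef) (hW0 : ∀ p, (W0 p).PosSemidef)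
    (hR : ∀ l, (R l).PosSemidef) (hR0 : ∀ l, (R0 l).PosSemidef)
    (hne : ∀ p, star (hch p) ⬝ᵥ (W p *ᵥ hch p) ≠ 0)
    (hh : hch (m₀, k₀) = h) (σ2 : ℝ) (hσ : 0 < σ2) :
    let H : Matrix (Fin n) (Fin n) ℂ := vecMulVec h (star h)
    let trH : Matrix (Fin n) (Fin n) ℂ → ℝ := fun X => (star h ⬝ᵥ (X *ᵥ h)).re
    let wbar : M × K → Fin n → ℂ :=
      fun p => ((star (hch p) ⬝ᵥ (W p *ᵥ hch p)) ^ (-(1/2) : ℂ)) • (W p *ᵥ hch p)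
    let Wbar : M × K → Matrix (Fin n) (Fin n) ℂ :=
      fun p => vecMulVec (wbar p) (star (wbar p))
    let Rbar : M → Matrix (Fin n) (Fin n) ℂ :=
      fun l => (∑ i : K, W (l, i)) + R l - ∑ i : K, Wbar (l, i)
    let F : (M × K → Matrix (Fin n) (Fin n) ℂ) → (M → Matrix (Fin n) (Fin n) ℂ) → ℝ :=
      fun V S =>
        Real.logb 2 ((∑ p, trH (V p)) + (∑ l, trH (S l)) + σ2) - a -
          c * ((∑ p ∈ Finset.univ.erase (m₀, k₀), trH (V p - W0 p)) +
               ∑ l, trH (S l - R0 l))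
    F Wbar Rbar = F W R := by
  intro H trH wbar Wbar Rbar F
  -- linearity of trH
  have hadd : ∀ A B, trH (A + B) = trH A + trH B := by
    intro A B; simp [trH, add_mulVec, dotProduct_add]
  have hsub : ∀ A B, trH (A - B) = trH A - trH B := by
    intro A B; simp [trH, sub_mulVec, dotProduct_sub]
  have hzero : trH 0 = 0 := by simp [trH]
  have hsum : ∀ (G : K → Matrix (Fin n) (Fin n) ℂ),
      trH (∑ i : K, G i) = ∑ i : K, trH (G i) := by
    intro G
    induction (Finset.univ : Finset K) using Finset.cons_induction with
    | empty => simpa using hzero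
    | cons b s hb ih => rw [Finset.sum_cons, hadd, ih, Finset.sum_cons]
  -- the key rank-one reconstruction identity
  set p₀ : M × K := (m₀, k₀) with hp₀
  have key : trH (Wbar p₀) = trH (W p₀) := by
    have hz := (hW p₀).dotProduct_mulVec_nonneg h
    set z : ℂ := star h ⬝ᵥ (W p₀ *ᵥ h) with hzdef
    have hz0 : z ≠ 0 := by
      have := hne p₀; rwa [hh] at this
    rw [Complex.nonneg_iff] at hz
    have him : z.im = 0 := hz.2.symm
    set r : ℝ := z.re with hrdef
    have hzr : z = (r : ℂ) := Complex.ext rfl (by simp [him])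
    have hr0 : 0 < r := lt_of_le_of_ne hz.1 (by
      intro hc; exact hz0 (by rw [hzr, ← hc]; simp))
    have hcpow : z ^ (-(1/2) : ℂ) = ((r ^ (-(1/2) : ℝ) : ℝ) : ℂ) := by
      rw [hzr, show (-(1/2) : ℂ) = ((-(1/2) : ℝ) : ℂ) by push_cast; ring,
        Complex.ofReal_cpow hr0.le]
    show (star h ⬝ᵥ (vecMulVec (wbar p₀) (star (wbar p₀)) *ᵥ h)).re = trH (W p₀)
    rw [dot_vecMulVec_mulVec]
    have hw : wbar p₀ = (z ^ (-(1/2) : ℂ)) • (W p₀ *ᵥ h) := by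
      simp only [wbar, hh, hzdef]
    rw [hw]
    set s : ℝ := r ^ (-(1/2) : ℝ) with hsdef
    have hss : s * s = r⁻¹ := by
      rw [hsdef, ← Real.rpow_add hr0, show (-(1/2) + -(1/2) : ℝ) = -1 by norm_num,
        Real.rpow_neg_one]
    have e1 : star h ⬝ᵥ ((z ^ (-(1/2) : ℂ)) • (W p₀ *ᵥ h)) = z ^ (-(1/2) : ℂ) * z := by
      rw [dotProduct_smul, smul_eq_mul, ← hzdef]
    have e2 : star ((z ^ (-(1/2) : ℂ)) • (W p₀ *ᵥ h)) ⬝ᵥ h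
        = star (z ^ (-(1/2) : ℂ)) * star z := by
      rw [star_smul, smul_dotProduct, smul_eq_mul, star_dotProduct, ← hzdef]
    rw [e1, e2, hcpow, hzr]
    simp only [Complex.star_def, Complex.conj_ofReal]
    have hval : ((s : ℂ) * (r : ℂ)) * ((s : ℂ) * (r : ℂ)) = ((r : ℝ) : ℂ) := by
      have hsr : s * r * (s * r) = r := by
        rw [show s * r * (s * r) = (s * s) * (r * r) by ring, hss]
        field_simp
      rw [show ((s : ℂ) * (r : ℂ)) * ((s : ℂ) * (r : ℂ)) = (((s * r * (s * r) : ℝ)) : ℂ)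
        by push_cast; ring, hsr]
    rw [hval, Complex.ofReal_re]
  -- telescoping identities
  have hRbar : ∀ l, trH (Rbar l)
      = (∑ i : K, trH (W (l, i))) + trH (R l) - ∑ i : K, trH (Wbar (l, i)) := by
    intro l
    show trH ((∑ i : K, W (l, i)) + R l - ∑ i : K, Wbar (l, i)) = _
    rw [hsub, hadd, hsum, hsum]
  have EA : (∑ p, trH (Wbar p)) + (∑ l, trH (Rbar l))
      = (∑ p, trH (W p)) + ∑ l, trH (R l) := by
    simp only [hRbar, Finset.sum_add_distrib, Finset.sum_sub_distrib]
    rw [← Fintype.sum_prod_type (f := fun p => trH (W p)),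
        ← Fintype.sum_prod_type (f := fun p => trH (Wbar p))]
    ring
  have EB : (∑ p ∈ Finset.univ.erase p₀, trH (Wbar p - W0 p)) +
        ∑ l, trH (Rbar l - R0 l)
      = (∑ p ∈ Finset.univ.erase p₀, trH (W p - W0 p)) +
        ∑ l, trH (R l - R0 l) := by
    have hRb : ∀ l, trH (Rbar l - R0 l)
        = (∑ i : K, trH (W (l, i))) + trH (R l) - (∑ i : K, trH (Wbar (l, i)))
          - trH (R0 l) := by
      intro l
      show trH (((∑ i : K, W (l, i)) + R l - ∑ i : K, Wbar (l, i)) - R0 l) = _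
      rw [hsub, hsub, hadd, hsum, hsum]
    simp only [hRb]
    simp only [hsub, Finset.sum_sub_distrib, Finset.sum_add_distrib]
    rw [Finset.sum_erase_eq_sub (f := fun p => trH (Wbar p)) (Finset.mem_univ p₀)]
    rw [Finset.sum_erase_eq_sub (f := fun p => trH (W p)) (Finset.mem_univ p₀)]
    rw [key, ← Fintype.sum_prod_type (f := fun p => trH (W p)),
        ← Fintype.sum_prod_type (f := fun p => trH (Wbar p))]
    ring
  show Real.logb 2 ((∑ p, trH (Wbar p)) + (∑ l, trH (Rbar l)) + σ2) - a -
      c * ((∑ p ∈ Finset.univ.erase p₀, trH (Wbar p - W0 p)) +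
        ∑ l, trH (Rbar l - R0 l)) = _
  rw [EA, EB]
end

section
/- Let n be a positive integer, let M and K be nonempty finite index sets, and fix (m₀,k₀) ∈ M × K. Let h ∈ ℂⁿ with H := h hᴴ. For each (l,i) ∈ M × K, let W_{l,i} be an n×n complex positive-semidefinite Hermitian matrix and h_{l,i} ∈ ℂⁿ a vector with h_{l,i}ᴴ W_{l,i} h_{l,i} ≠ 0 and h_{m₀,k₀} = h. Define w̃_{l,i} := (h_{l,i}ᴴ W_{l,i} h_{l,i})^(−1/2) · (W_{l,i} h_{l,i}) and W̃_{l,i} := w̃_{l,i} w̃_{l,i}ᴴ. Then for every σ² > 0: (i) tr(H W̃_{m₀,k₀}) = tr(H W_{m₀,k₀}); (ii) for every (l,i), tr(H W̃_{l,i}) ≤ tr(H W_{l,i}); and consequently (iii) tr(H W̃_{m₀,k₀}) / ( Σ_{(l,i)≠(m₀,k₀)} tr(H W̃_{l,i}) + σ² ) ≥ tr(H W_{m₀,k₀}) / ( Σ_{(l,i)≠(m₀,k₀)} tr(H W_{l,i}) + σ² ). -/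
open Matrix
open scoped ComplexOrder

lemma cs_psd {n : ℕ} (W : Matrix (Fin n) (Fin n) ℂ) (hW : W.PosSemidef)
    (x y : Fin n → ℂ) :
    ‖star x ⬝ᵥ (W *ᵥ y)‖ ^ 2 ≤ (star x ⬝ᵥ (W *ᵥ x)).re * (star y ⬝ᵥ (W *ᵥ y)).re := by
  obtain ⟨S, hS, rfl⟩ : ∃ S : Matrix (Fin n) (Fin n) ℂ, S.IsHermitian ∧ S * S = W :=
    by open scoped MatrixOrder in
      exact ⟨CFC.sqrt W, (nonneg_iff_posSemidef.mp (CFC.sqrt_nonneg W)).1, CFC.sqrt_mul_sqrt_self W (nonneg_iff_posSemidef.mpr hW)⟩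
  have key : ∀ u v : Fin n → ℂ, star u ⬝ᵥ ((S * S) *ᵥ v) =
      inner ℂ ((EuclideanSpace.equiv (Fin n) ℂ).symm (S *ᵥ u))
            ((EuclideanSpace.equiv (Fin n) ℂ).symm (S *ᵥ v)) := by
    intro u v
    rw [← mulVec_mulVec, dotProduct_mulVec, show star u ᵥ* S = star (S *ᵥ u) by rw [star_mulVec, hS.eq]]
    simp [EuclideanSpace.equiv, PiLp.inner_apply, dotProduct, RCLike.inner_apply, mul_comm]
  rw [key x y, key x x, key y y]
  set u := (EuclideanSpace.equiv (Fin n) ℂ).symm (S *ᵥ x)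
  set v := (EuclideanSpace.equiv (Fin n) ℂ).symm (S *ᵥ y)
  have h1 : ‖(inner ℂ u v : ℂ)‖ ≤ ‖u‖ * ‖v‖ := norm_inner_le_norm u v
  have h2 : (inner ℂ u u : ℂ).re = ‖u‖ ^ 2 := by
    rw [← RCLike.re_to_complex]; exact inner_self_eq_norm_sq u
  have h3 : (inner ℂ v v : ℂ).re = ‖v‖ ^ 2 := by
    rw [← RCLike.re_to_complex]; exact inner_self_eq_norm_sq v
  rw [h2, h3]
  nlinarith [norm_nonneg (inner ℂ u v : ℂ), norm_nonneg u, norm_nonneg v]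

theorem stmt6 (n : ℕ) (hn : 0 < n) (M K : Type*) [Fintype M] [Fintype K]
    [Nonempty M] [Nonempty K] [DecidableEq M] [DecidableEq K]
    (m₀ : M) (k₀ : K) (h : Fin n → ℂ)
    (W : M × K → Matrix (Fin n) (Fin n) ℂ) (hch : M × K → Fin n → ℂ)
    (hW : ∀ p, (W p).PosSemidef)
    (hne : ∀ p, star (hch p) ⬝ᵥ (W p *ᵥ hch p) ≠ 0)
    (hh : hch (m₀, k₀) = h) (σ2 : ℝ) (hσ : 0 < σ2) :
    let H : Matrix (Fin n) (Fin n) ℂ := vecMulVec h (star h)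
    let trH : Matrix (Fin n) (Fin n) ℂ → ℝ := fun X => (star h ⬝ᵥ (X *ᵥ h)).re
    let wtil : M × K → Fin n → ℂ :=
      fun p => ((star (hch p) ⬝ᵥ (W p *ᵥ hch p)) ^ (-(1/2) : ℂ)) • (W p *ᵥ hch p)
    let Wtil : M × K → Matrix (Fin n) (Fin n) ℂ :=
      fun p => vecMulVec (wtil p) (star (wtil p))
    trH (Wtil (m₀, k₀)) = trH (W (m₀, k₀)) ∧
    (∀ p : M × K, trH (Wtil p) ≤ trH (W p)) ∧
    trH (Wtil (m₀, k₀)) / ((∑ p ∈ Finset.univ.erase (m₀, k₀), trH (Wtil p)) + σ2)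
      ≥ trH (W (m₀, k₀)) / ((∑ p ∈ Finset.univ.erase (m₀, k₀), trH (W p)) + σ2) := by
  intro H trH wtil Wtil
  -- positivity and realness of a p
  have hfacts : ∀ p, 0 < (star (hch p) ⬝ᵥ (W p *ᵥ hch p)).re ∧
      star (hch p) ⬝ᵥ (W p *ᵥ hch p) = ((star (hch p) ⬝ᵥ (W p *ᵥ hch p)).re : ℂ) := by
    intro p
    have h0 := (hW p).dotProduct_mulVec_nonneg (hch p)
    rw [Complex.le_def] at h0
    obtain ⟨h1, h2⟩ := h0
    simp only [Complex.zero_re, Complex.zero_im] at h1 h2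
    have heq : star (hch p) ⬝ᵥ (W p *ᵥ hch p) =
        ((star (hch p) ⬝ᵥ (W p *ᵥ hch p)).re : ℂ) := by
      apply Complex.ext <;> simp [← h2]
    refine ⟨lt_of_le_of_ne h1 ?_, heq⟩
    intro hc
    exact hne p (by rw [heq, ← hc]; simp)
  -- mulVec of rank-one matrix
  have hmv : ∀ w v : Fin n → ℂ, vecMulVec w v *ᵥ h = (v ⬝ᵥ h) • w := by
    intro w v; ext i
    simp only [mulVec, vecMulVec_apply, dotProduct, Pi.smul_apply, smul_eq_mul,
      Finset.sum_mul]
    exact Finset.sum_congr rfl fun j _ => by ring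
  -- key formula for trH (Wtil p)
  have keyA : ∀ p, trH (Wtil p) =
      ‖star h ⬝ᵥ (W p *ᵥ hch p)‖ ^ 2 / (star (hch p) ⬝ᵥ (W p *ᵥ hch p)).re := by
    intro p
    obtain ⟨har, heq⟩ := hfacts p
    set a := star (hch p) ⬝ᵥ (W p *ᵥ hch p) with ha
    set t := star h ⬝ᵥ (W p *ᵥ hch p) with ht
    have hz : star h ⬝ᵥ wtil p = a ^ (-(1/2) : ℂ) * t := by
      simp [wtil, dotProduct_smul, smul_eq_mul]; rfl
    have hsw : star (wtil p) ⬝ᵥ h = star (star h ⬝ᵥ wtil p) := star_dotProduct _ _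
    have : trH (Wtil p) = (star (star h ⬝ᵥ wtil p) * (star h ⬝ᵥ wtil p)).re := by
      simp only [trH, Wtil, hmv, dotProduct_smul, smul_eq_mul, hsw]
    rw [this]
    have hnormsq : ∀ z : ℂ, (star z * z).re = ‖z‖ ^ 2 := by
      intro z
      rw [show (star z : ℂ) = starRingEnd ℂ z from rfl, mul_comm, Complex.mul_conj]
      simp [Complex.sq_norm]
    rw [hnormsq, hz, norm_mul, mul_pow]
    have hca : ‖a ^ (-(1/2) : ℂ)‖ = a.re ^ (-(1/2) : ℝ) := by
      rw [heq, Complex.norm_cpow_eq_rpow_re_of_pos har]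
      norm_num
    rw [hca, ← Real.rpow_natCast (a.re ^ (-(1/2) : ℝ)) 2, ← Real.rpow_mul har.le]
    norm_num [Real.rpow_neg_one, div_eq_mul_inv, mul_comm]
  -- part (i)
  have part1 : trH (Wtil (m₀, k₀)) = trH (W (m₀, k₀)) := by
    rw [keyA (m₀, k₀)]
    obtain ⟨har, heq⟩ := hfacts (m₀, k₀)
    rw [hh] at har heq ⊢
    rw [heq, Complex.norm_real, Real.norm_of_nonneg har.le]
    simp only [Complex.ofReal_re]
    rw [sq, mul_div_assoc, div_self har.ne', mul_one]
  -- part (ii)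
  have part2 : ∀ p, trH (Wtil p) ≤ trH (W p) := by
    intro p
    rw [keyA p]
    obtain ⟨har, _⟩ := hfacts p
    rw [div_le_iff₀ har]
    exact cs_psd (W p) (hW p) h (hch p)
  -- nonnegativity of trH (Wtil p)
  have hnn : ∀ p, 0 ≤ trH (Wtil p) := by
    intro p
    rw [keyA p]
    exact div_nonneg (sq_nonneg _) (hfacts p).1.le
  refine ⟨part1, part2, ?_⟩
  rw [ge_iff_le, ← part1]
  have hnum : 0 ≤ trH (Wtil (m₀, k₀)) := hnn _
  have hden : 0 < (∑ p ∈ Finset.univ.erase (m₀, k₀), trH (Wtil p)) + σ2 :=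
    add_pos_of_nonneg_of_pos (Finset.sum_nonneg fun p _ => hnn p) hσ
  have hsum : (∑ p ∈ Finset.univ.erase (m₀, k₀), trH (Wtil p))
      ≤ ∑ p ∈ Finset.univ.erase (m₀, k₀), trH (W p) :=
    Finset.sum_le_sum fun p _ => part2 p
  exact div_le_div_of_nonneg_left hnum hden (by linarith)
end
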